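/- arXiv:1912.05993 — 2 statements merged into one kernel-verified Lean document; each statement's English description precedes it below -/
import Mathlib

section
/- The kernel of the operator (L,B) has the same (finite) dimension as the kernel of the characteristic matrix M(L,B) ∈ ℂ^{r×m}, whose j-th column equals B applied to the j-th column of the fundamental matrix Y. -/
open MeasureTheory Set Filter Topology intervalIntegral
open scoped ENNReal NNReal Matrix

noncomputable section

/-- Membership in the Sobolev space `W_p^n([a,b];ℂ)`: for `n ≥ 1`, `y ∈ C^{n-1}` on `[a,b]`,
`y^{(n-1)}` is absolutely continuous with a.e. derivative `g ∈ L_p`; `W_p^0 = L_p`. -/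
def MemW (p : ℝ≥0∞) (n : ℕ) (a b : ℝ) (y : ℝ → ℂ) : Prop :=
  match n with
  | 0 => MemLp y p (volume.restrict (Set.Icc a b))
  | Nat.succ k =>
      ContDiffOn ℝ k y (Set.Icc a b) ∧
      ∃ g : ℝ → ℂ, MemLp g p (volume.restrict (Set.Icc a b)) ∧
        ∀ t ∈ Set.Icc a b,
          iteratedDerivWithin k y (Set.Icc a b) t
            = iteratedDerivWithin k y (Set.Icc a b) a + ∫ s in a..t, g s

/-- The Sobolev norm `‖y‖_{n,p} = ∑_{k=0}^{n} ‖y^{(k)}‖_p` on `[a,b]`. -/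
def WNorm (p : ℝ≥0∞) (n : ℕ) (a b : ℝ) (y : ℝ → ℂ) : ℝ :=
  ∑ k ∈ Finset.range (n + 1),
    (eLpNorm (iteratedDerivWithin k y (Set.Icc a b)) p (volume.restrict (Set.Icc a b))).toReal

/-- Componentwise membership in `(W_p^n)^m`. -/
def VMemW (p : ℝ≥0∞) (n : ℕ) (a b : ℝ) {m : ℕ} (y : ℝ → Fin m → ℂ) : Prop :=
  ∀ i, MemW p n a b (fun t => y t i)

/-- Norm on `(W_p^n)^m` (sum of component norms, an equivalent norm). -/
def VNorm (p : ℝ≥0∞) (n : ℕ) (a b : ℝ) {m : ℕ} (y : ℝ → Fin m → ℂ) : ℝ :=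
  ∑ i, WNorm p n a b (fun t => y t i)

/-- Entrywise membership in `(W_p^n)^{m×m}`. -/
def MMemW (p : ℝ≥0∞) (n : ℕ) (a b : ℝ) {m : ℕ} (A : ℝ → Matrix (Fin m) (Fin m) ℂ) : Prop :=
  ∀ i j, MemW p n a b (fun t => A t i j)

/-- Norm on `(W_p^n)^{m×m}`. -/
def MNorm (p : ℝ≥0∞) (n : ℕ) (a b : ℝ) {m : ℕ} (A : ℝ → Matrix (Fin m) (Fin m) ℂ) : ℝ :=
  ∑ i, ∑ j, WNorm p n a b (fun t => A t i j)

/-- `y` solves `y' + A y = f` on `[a,b]` (a.e.; everywhere for `n ≥ 2`), in integral form: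
`y(t) = y(a) + ∫_a^t (f(s) - A(s) y(s)) ds`. -/
def Solves (a b : ℝ) {m : ℕ} (A : ℝ → Matrix (Fin m) (Fin m) ℂ)
    (f y : ℝ → Fin m → ℂ) : Prop :=
  ∀ t ∈ Set.Icc a b, ∀ i, y t i = y a i + ∫ s in a..t, (f s i - (A s *ᵥ y s) i)

/-- The differential expression `(Ly)(t) = y'(t) + A(t) y(t)` on `[a,b]`. -/
def Lop (a b : ℝ) {m : ℕ} (A : ℝ → Matrix (Fin m) (Fin m) ℂ)
    (y : ℝ → Fin m → ℂ) : ℝ → Fin m → ℂ :=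
  fun t i => derivWithin (fun s => y s i) (Set.Icc a b) t + (A t *ᵥ y t) i

/-- `B : (W_p^n)^m → ℂ^r` is linear and bounded w.r.t. the Sobolev norm. -/
def IsBddLin (p : ℝ≥0∞) (n : ℕ) (a b : ℝ) {m r : ℕ}
    (B : (ℝ → Fin m → ℂ) → (Fin r → ℂ)) : Prop :=
  (∀ y z, B (y + z) = B y + B z) ∧ (∀ (c : ℂ) y, B (c • y) = c • B y) ∧
  ∃ K : ℝ, ∀ y, VMemW p n a b y → ‖B y‖ ≤ K * VNorm p n a b y

/-- The characteristic matrix `M(L,B) ∈ ℂ^{r×m}`: its `j`-th column is `B` applied to the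
`j`-th column of the fundamental matrix `Y`. -/
def charM {m r : ℕ} (B : (ℝ → Fin m → ℂ) → (Fin r → ℂ))
    (Y : ℝ → Matrix (Fin m) (Fin m) ℂ) : Matrix (Fin r) (Fin m) ℂ :=
  Matrix.of fun i j => B (fun t k => Y t k j) i

/-- `Y` is the fundamental matrix: `Y' + A Y = 0`, `Y(a) = I`, in integral (entrywise) form. -/
def IsFund (a b : ℝ) {m : ℕ} (A Y : ℝ → Matrix (Fin m) (Fin m) ℂ) : Prop :=
  Y a = 1 ∧ ∀ t ∈ Set.Icc a b, ∀ i j,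
    Y t i j = (1 : Matrix (Fin m) (Fin m) ℂ) i j - ∫ s in a..t, (A s * Y s) i j

/-- The kernel of `(L,B)` has dimension `d`. -/
def KerDim (p : ℝ≥0∞) (n : ℕ) (a b : ℝ) {m r : ℕ}
    (A : ℝ → Matrix (Fin m) (Fin m) ℂ) (B : (ℝ → Fin m → ℂ) → (Fin r → ℂ)) (d : ℕ) : Prop :=
  ∃ φ : Fin d → (ℝ → Fin m → ℂ),
    (∀ i, VMemW p n a b (φ i) ∧ Solves a b A 0 (φ i) ∧ B (φ i) = 0) ∧
    LinearIndependent ℂ (fun i => fun tc : Set.Icc a b => φ i tc) ∧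
    ∀ y, VMemW p n a b y → Solves a b A 0 y → B y = 0 →
      ∃ c : Fin d → ℂ, ∀ t ∈ Set.Icc a b, y t = ∑ i, c i • φ i t

/-- `(f,c)` lies in the range of `(L,B)`. -/
def InRange (p : ℝ≥0∞) (n : ℕ) (a b : ℝ) {m r : ℕ}
    (A : ℝ → Matrix (Fin m) (Fin m) ℂ) (B : (ℝ → Fin m → ℂ) → (Fin r → ℂ))
    (w : (ℝ → Fin m → ℂ) × (Fin r → ℂ)) : Prop :=
  ∃ y, VMemW p n a b y ∧ Solves a b A w.1 y ∧ B y = w.2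

/-- The cokernel of `(L,B)` (in `(W_p^{n-1})^m × ℂ^r`) has dimension `d`. -/
def CokerDim (p : ℝ≥0∞) (n : ℕ) (a b : ℝ) {m r : ℕ}
    (A : ℝ → Matrix (Fin m) (Fin m) ℂ) (B : (ℝ → Fin m → ℂ) → (Fin r → ℂ)) (d : ℕ) : Prop :=
  ∃ v : Fin d → (ℝ → Fin m → ℂ) × (Fin r → ℂ),
    (∀ i, VMemW p (n - 1) a b (v i).1) ∧
    (∀ c : Fin d → ℂ, InRange p n a b A B (∑ i, c i • v i) → c = 0) ∧
    ∀ w : (ℝ → Fin m → ℂ) × (Fin r → ℂ), VMemW p (n - 1) a b w.1 →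
      ∃ c : Fin d → ℂ, InRange p n a b A B (w - ∑ i, c i • v i)

namespace Aux

variable {a b : ℝ} {p : ℝ≥0∞} {n : ℕ}

lemma iterDerivZero {s : Set ℝ} (hs : UniqueDiffOn ℝ s) {x : ℝ} (hx : x ∈ s) (k : ℕ) :
    iteratedDerivWithin k (fun _ => (0:ℂ)) s x = 0 := by
  rw [iteratedDerivWithin, iteratedFDerivWithin_zero_fun]
  simp

lemma intervalIntegrable_of_integrableOn {E : Type*} [NormedAddCommGroup E] {f : ℝ → E} {t : ℝ}
    (h : IntegrableOn f (Set.Icc a b)) (ht : t ∈ Set.Icc a b) :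
    IntervalIntegrable f volume a t := by
  rw [intervalIntegrable_iff]
  refine h.mono_set ?_
  rw [Set.uIoc_of_le ht.1]
  exact Set.Subset.trans Set.Ioc_subset_Icc_self (Set.Icc_subset_Icc le_rfl ht.2)

lemma memW_integrableOn (hp : 1 ≤ p) {f : ℝ → ℂ} (h : MemW p n a b f) :
    IntegrableOn f (Set.Icc a b) := by
  cases n with
  | zero => exact memLp_one_iff_integrable.mp (h.mono_exponent hp)
  | succ k => exact h.1.continuousOn.integrableOn_Icc

lemma memW_continuousOn (hn : n ≠ 0) {f : ℝ → ℂ} (h : MemW p n a b f) :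
    ContinuousOn f (Set.Icc a b) := by
  cases n with
  | zero => exact absurd rfl hn
  | succ k => exact h.1.continuousOn

lemma memW_zero (hab : a < b) : MemW p n a b (fun _ => (0:ℂ)) := by
  cases n with
  | zero => exact MemLp.zero'
  | succ k =>
    refine ⟨contDiffOn_const, fun _ => 0, MemLp.zero', fun t ht => ?_⟩
    have hs : UniqueDiffOn ℝ (Set.Icc a b) := uniqueDiffOn_Icc hab
    simp [iterDerivZero hs ht, iterDerivZero hs (Set.left_mem_Icc.2 hab.le)]

lemma memW_smul (hab : a < b) (c : ℂ) {f : ℝ → ℂ} (h : MemW p n a b f) :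
    MemW p n a b (fun t => c * f t) := by
  cases n with
  | zero => exact h.const_mul c
  | succ k =>
    obtain ⟨h1, g, hg, hint⟩ := h
    have hs : UniqueDiffOn ℝ (Set.Icc a b) := uniqueDiffOn_Icc hab
    have ha : a ∈ Set.Icc a b := Set.left_mem_Icc.2 hab.le
    refine ⟨h1.const_smul c, fun s => c * g s, hg.const_mul c, fun t ht => ?_⟩
    have e1 : ∀ x ∈ Set.Icc a b,
        iteratedDerivWithin k (fun t => c * f t) (Set.Icc a b) x
          = c * iteratedDerivWithin k f (Set.Icc a b) x := by
      intro x hx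
      have := iteratedDerivWithin_const_smul (R := ℂ) hx hs c (h1 x hx)
      simpa [smul_eq_mul] using this
    rw [e1 t ht, e1 a ha, hint t ht, mul_add]
    congr 1
    rw [← intervalIntegral.integral_const_mul]

lemma memW_add (hab : a < b) (hp : 1 ≤ p) {f g : ℝ → ℂ}
    (hf : MemW p n a b f) (hg : MemW p n a b g) : MemW p n a b (fun t => f t + g t) := by
  cases n with
  | zero => exact hf.add hg
  | succ k =>
    obtain ⟨h1, u, hu, hintu⟩ := hf
    obtain ⟨h2, v, hv, hintv⟩ := hg
    have hs : UniqueDiffOn ℝ (Set.Icc a b) := uniqueDiffOn_Icc hab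
    have ha : a ∈ Set.Icc a b := Set.left_mem_Icc.2 hab.le
    refine ⟨h1.add h2, fun s => u s + v s, hu.add hv, fun t ht => ?_⟩
    have e1 : ∀ x ∈ Set.Icc a b,
        iteratedDerivWithin k (fun t => f t + g t) (Set.Icc a b) x
          = iteratedDerivWithin k f (Set.Icc a b) x + iteratedDerivWithin k g (Set.Icc a b) x := by
      intro x hx
      exact iteratedDerivWithin_add hx hs (h1 x hx) (h2 x hx)
    have hiu : IntervalIntegrable u volume a t :=
      intervalIntegrable_of_integrableOn
        (memLp_one_iff_integrable.mp (hu.mono_exponent hp)) ht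
    have hiv : IntervalIntegrable v volume a t :=
      intervalIntegrable_of_integrableOn
        (memLp_one_iff_integrable.mp (hv.mono_exponent hp)) ht
    rw [e1 t ht, e1 a ha, hintu t ht, hintv t ht,
      intervalIntegral.integral_add hiu hiv]
    ring

lemma memW_sum (hab : a < b) (hp : 1 ≤ p) {ι : Type*} (S : Finset ι)
    (c : ι → ℂ) (f : ι → ℝ → ℂ) (h : ∀ i ∈ S, MemW p n a b (f i)) :
    MemW p n a b (fun t => ∑ i ∈ S, c i * f i t) := by
  classical
  induction S using Finset.induction_on with
  | empty => simpa using memW_zero (p := p) (n := n) hab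
  | insert j S hnotmem ih =>
    have : (fun t => ∑ i ∈ insert j S, c i * f i t)
        = fun t => c j * f j t + ∑ i ∈ S, c i * f i t := by
      funext t; rw [Finset.sum_insert hnotmem]
    rw [this]
    exact memW_add hab hp (memW_smul hab _ (h j (Finset.mem_insert_self j S)))
      (ih fun i hi => h i (Finset.mem_insert_of_mem hi))



variable {a b : ℝ} {p : ℝ≥0∞} {n : ℕ}

lemma iterDerivVanish (hab : a < b) {f : ℝ → ℂ} (hf : ∀ t ∈ Set.Icc a b, f t = 0)
    (k : ℕ) {x : ℝ} (hx : x ∈ Set.Icc a b) :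
    iteratedDerivWithin k f (Set.Icc a b) x = 0 := by
  have hs : UniqueDiffOn ℝ (Set.Icc a b) := uniqueDiffOn_Icc hab
  have := iteratedDerivWithin_congr (n := k) (f := f) (g := fun _ => 0) hf hx
  rw [this]
  exact iterDerivZero hs hx k

lemma wnorm_vanish (hab : a < b) {f : ℝ → ℂ} (hf : ∀ t ∈ Set.Icc a b, f t = 0) :
    WNorm p n a b f = 0 := by
  apply Finset.sum_eq_zero
  intro k _
  have : eLpNorm (iteratedDerivWithin k f (Set.Icc a b)) p (volume.restrict (Set.Icc a b)) = 0 := by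
    have hcongr : iteratedDerivWithin k f (Set.Icc a b)
        =ᵐ[volume.restrict (Set.Icc a b)] (fun _ => (0:ℂ)) :=
      (ae_restrict_iff' measurableSet_Icc).2 (ae_of_all _ fun x hx => iterDerivVanish hab hf k hx)
    rw [eLpNorm_congr_ae hcongr]
    exact eLpNorm_zero
  rw [this]; simp

lemma vnorm_vanish (hab : a < b) {m : ℕ} {f : ℝ → Fin m → ℂ}
    (hf : ∀ t ∈ Set.Icc a b, f t = 0) : VNorm p n a b f = 0 :=
  Finset.sum_eq_zero fun i _ => wnorm_vanish hab fun t ht => by rw [hf t ht]; rfl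

section Bops
variable {m r : ℕ} {B : (ℝ → Fin m → ℂ) → (Fin r → ℂ)}

lemma B_zero (hB : IsBddLin p n a b B) : B 0 = 0 := by
  have := hB.1 0 0
  simpa using this.symm

lemma B_vanish (hB : IsBddLin p n a b B) (hab : a < b) {z : ℝ → Fin m → ℂ}
    (hz : VMemW p n a b z) (h0 : ∀ t ∈ Set.Icc a b, z t = 0) : B z = 0 := by
  obtain ⟨-, -, K, hK⟩ := hB
  have := hK z hz
  rw [vnorm_vanish hab h0, mul_zero] at this
  exact norm_le_zero_iff.mp this

lemma B_sum (hB : IsBddLin p n a b B) {ι : Type*} (S : Finset ι) (f : ι → ℝ → Fin m → ℂ) :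
    B (∑ i ∈ S, f i) = ∑ i ∈ S, B (f i) := by
  classical
  induction S using Finset.induction_on with
  | empty => simpa using B_zero hB
  | insert j S hnotmem ih =>
    rw [Finset.sum_insert hnotmem, Finset.sum_insert hnotmem, hB.1, ih]

end Bops


section ODE
variable {m : ℕ} {A Y : ℝ → Matrix (Fin m) (Fin m) ℂ}

/-- entries of `A * Y` are integrable when `A` entries are integrable and `Y` entries cts. -/
lemma AY_integrable (hA : ∀ i j, IntegrableOn (fun s => A s i j) (Set.Icc a b))
    (hY : ∀ i j, ContinuousOn (fun s => Y s i j) (Set.Icc a b)) (i j : Fin m) :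
    IntegrableOn (fun s => (A s * Y s) i j) (Set.Icc a b) := by
  have : (fun s => (A s * Y s) i j) = fun s => ∑ k, A s i k * Y s k j := by
    funext s; rw [Matrix.mul_apply]
  rw [this]
  exact integrable_finset_sum _ fun k _ =>
    (hA i k).mul_continuousOn (hY k j) isCompact_Icc

/-- entries of `A *ᵥ z` are integrable when `z` components cts. -/
lemma Az_integrable (hA : ∀ i j, IntegrableOn (fun s => A s i j) (Set.Icc a b))
    {z : ℝ → Fin m → ℂ} (hz : ∀ j, ContinuousOn (fun s => z s j) (Set.Icc a b)) (i : Fin m) :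
    IntegrableOn (fun s => (A s *ᵥ z s) i) (Set.Icc a b) := by
  have : (fun s => (A s *ᵥ z s) i) = fun s => ∑ k, A s i k * z s k := by
    funext s; rfl
  rw [this]
  exact integrable_finset_sum _ fun k _ =>
    (hA i k).mul_continuousOn (hz k) isCompact_Icc

/-- `t ↦ Y t *ᵥ c` solves the homogeneous equation. -/
lemma solves_mulVec (hab : a < b)
    (hA : ∀ i j, IntegrableOn (fun s => A s i j) (Set.Icc a b))
    (hYc : ∀ i j, ContinuousOn (fun s => Y s i j) (Set.Icc a b))
    (hYf : IsFund a b A Y) (c : Fin m → ℂ) :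
    Solves a b A 0 (fun t => Y t *ᵥ c) := by
  intro t ht i
  show (Y t *ᵥ c) i = (Y a *ᵥ c) i
      + ∫ s in a..t, ((0 : ℝ → Fin m → ℂ) s i - (A s *ᵥ (Y s *ᵥ c)) i)
  have hint : ∀ j, IntervalIntegrable (fun s => (A s * Y s) i j * c j) volume a t :=
    fun j => intervalIntegrable_of_integrableOn ((AY_integrable hA hYc i j).mul_const _) ht
  have e1 : (Y t *ᵥ c) i = (Y a *ᵥ c) i - ∑ j, (∫ s in a..t, (A s * Y s) i j) * c j := by
    have : ∀ j, Y t i j = Y a i j - ∫ s in a..t, (A s * Y s) i j := by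
      intro j
      rw [hYf.2 t ht i j, hYf.1]
    simp only [Matrix.mulVec, dotProduct, Finset.mul_sum]
    rw [← Finset.sum_sub_distrib]
    refine Finset.sum_congr rfl fun j _ => ?_
    rw [this j, sub_mul]
  rw [e1]
  have e2 : ∑ j, (∫ s in a..t, (A s * Y s) i j) * c j
      = ∫ s in a..t, (A s *ᵥ (Y s *ᵥ c)) i := by
    have : ∀ s, (A s *ᵥ (Y s *ᵥ c)) i = ∑ j, (A s * Y s) i j * c j := by
      intro s
      rw [Matrix.mulVec_mulVec]
      rfl
    simp only [this]
    rw [intervalIntegral.integral_finset_sum fun j _ => hint j]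
    refine Finset.sum_congr rfl fun j _ => ?_
    rw [← intervalIntegral.integral_mul_const]
  rw [e2]
  have e3 : ∀ s : ℝ, ((0 : ℝ → Fin m → ℂ) s i - (A s *ᵥ (Y s *ᵥ c)) i)
      = -((A s *ᵥ (Y s *ᵥ c)) i) := by intro s; simp
  simp only [e3]
  rw [intervalIntegral.integral_neg]
  ring

end ODE

lemma intervalIntegrable_of_integrableOn' {E : Type*} [NormedAddCommGroup E] {f : ℝ → E}
    {u v : ℝ} (h : IntegrableOn f (Set.Icc a b)) (hu : u ∈ Set.Icc a b) (hv : v ∈ Set.Icc a b) :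
    IntervalIntegrable f volume u v := by
  rw [intervalIntegrable_iff]
  exact h.mono_set (Set.uIoc_subset_uIcc.trans (Set.uIcc_subset_Icc hu hv))

lemma gronwall_zero (hab : a < b) {m : ℕ} {A : ℝ → Matrix (Fin m) (Fin m) ℂ}
    (hA : ∀ i j, IntegrableOn (fun s => A s i j) (Set.Icc a b))
    {z : ℝ → Fin m → ℂ} (hzc : ∀ i, ContinuousOn (fun t => z t i) (Set.Icc a b))
    (hz : ∀ t ∈ Set.Icc a b, ∀ i, z t i = - ∫ s in a..t, (A s *ᵥ z s) i) :
    ∀ t ∈ Set.Icc a b, ∀ i, z t i = 0 := by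
  set g : ℝ → ℝ := fun s => ∑ i, ∑ j, ‖A s i j‖ with hgdef
  set h : ℝ → ℝ := fun t => ∑ i, ‖z t i‖ with hhdef
  have hg_int : IntegrableOn g (Set.Icc a b) :=
    integrable_finset_sum _ fun i _ => integrable_finset_sum _ fun j _ => (hA i j).norm
  have hg_nonneg : ∀ s, 0 ≤ g s := fun s =>
    Finset.sum_nonneg fun i _ => Finset.sum_nonneg fun j _ => norm_nonneg _
  have hh_cont : ContinuousOn h (Set.Icc a b) :=
    continuousOn_finset_sum _ fun i _ => (hzc i).norm
  have hh_nonneg : ∀ t, 0 ≤ h t := fun t => Finset.sum_nonneg fun i _ => norm_nonneg _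
  have hh_le : ∀ t i, ‖z t i‖ ≤ h t := fun t i =>
    Finset.single_le_sum (f := fun j => ‖z t j‖) (fun j _ => norm_nonneg _) (Finset.mem_univ i)
  have hAz_int : ∀ i, IntegrableOn (fun s => (A s *ᵥ z s) i) (Set.Icc a b) :=
    Az_integrable hA hzc
  have hgh_int : IntegrableOn (fun s => g s * h s) (Set.Icc a b) :=
    hg_int.mul_continuousOn hh_cont isCompact_Icc
  have hbound : ∀ s ∈ Set.Icc a b, (∑ i, ‖(A s *ᵥ z s) i‖) ≤ g s * h s := by
    intro s hs
    rw [hgdef]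
    simp only [Finset.sum_mul]
    refine Finset.sum_le_sum fun i _ => ?_
    have e0 : (A s *ᵥ z s) i = ∑ j, A s i j * z s j := rfl
    calc ‖(A s *ᵥ z s) i‖ ≤ ∑ j, ‖A s i j * z s j‖ := by rw [e0]; exact norm_sum_le _ _
    _ ≤ ∑ j, ‖A s i j‖ * h s := by
        refine Finset.sum_le_sum fun j _ => ?_
        rw [norm_mul]
        exact mul_le_mul_of_nonneg_left (hh_le s j) (norm_nonneg _)
  have hkey : ∀ t ∈ Set.Icc a b, h t ≤ ∫ s in a..t, g s * h s := by
    intro t ht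
    have e1 : h t = ∑ i, ‖∫ s in a..t, (A s *ᵥ z s) i‖ :=
      Finset.sum_congr rfl fun i _ => by rw [hz t ht i, norm_neg]
    calc h t = ∑ i, ‖∫ s in a..t, (A s *ᵥ z s) i‖ := e1
    _ ≤ ∑ i, ∫ s in a..t, ‖(A s *ᵥ z s) i‖ := Finset.sum_le_sum fun i _ =>
        intervalIntegral.norm_integral_le_integral_norm ht.1
    _ = ∫ s in a..t, ∑ i, ‖(A s *ᵥ z s) i‖ :=
        (intervalIntegral.integral_finset_sum fun i _ =>
          (intervalIntegrable_of_integrableOn (hAz_int i).norm ht)).symm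
    _ ≤ ∫ s in a..t, g s * h s := by
        refine intervalIntegral.integral_mono_on ht.1
          (intervalIntegrable_of_integrableOn
            (integrable_finset_sum _ fun i _ => (hAz_int i).norm) ht)
          (intervalIntegrable_of_integrableOn hgh_int ht) ?_
        intro x hx
        exact hbound x ⟨hx.1, hx.2.trans ht.2⟩
  -- the set where h vanishes up to t
  set S : Set ℝ := {t | t ∈ Set.Icc a b ∧ ∀ u ∈ Set.Icc a t, h u = 0} with hSdef
  have h_a0 : h a = 0 := le_antisymm (by simpa using hkey a (Set.left_mem_Icc.2 hab.le))
    (hh_nonneg a)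
  have haS : a ∈ S := ⟨Set.left_mem_Icc.2 hab.le, fun u hu => by
      have : u = a := le_antisymm hu.2 hu.1
      rw [this]; exact h_a0⟩
  have hbdd : BddAbove S := ⟨b, fun t htS => htS.1.2⟩
  set c := sSup S with hcdef
  have hac : a ≤ c := le_csSup hbdd haS
  have hcb : c ≤ b := csSup_le ⟨a, haS⟩ fun t htS => htS.1.2
  have h_zero_Ico : ∀ u ∈ Set.Ico a c, h u = 0 := by
    intro u hu
    obtain ⟨t, htS, hut⟩ := exists_lt_of_lt_csSup ⟨a, haS⟩ hu.2
    exact htS.2 u ⟨hu.1, hut.le⟩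
  have hint_ac : ∀ t ∈ Set.Icc a c, (∫ s in a..t, g s * h s) = 0 := by
    intro t htc
    have e : ∫ s in a..t, g s * h s = ∫ s in a..t, (0:ℝ) := by
      apply intervalIntegral.integral_congr_ae
      rw [Filter.eventually_iff, mem_ae_iff]
      refine measure_mono_null ?_ (measure_singleton c)
      intro x hx
      simp only [Set.mem_compl_iff, Set.mem_setOf_eq, Classical.not_imp] at hx
      obtain ⟨hxmem, hxne⟩ := hx
      rw [Set.uIoc_of_le htc.1] at hxmem
      rcases lt_or_eq_of_le (hxmem.2.trans htc.2) with hlt | heq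
      · exact absurd (by rw [h_zero_Ico x ⟨hxmem.1.le, hlt⟩, mul_zero]) hxne
      · exact heq
    rw [e, intervalIntegral.integral_zero]
  have hcIcc : c ∈ Set.Icc a b := ⟨hac, hcb⟩
  have hc_end : h c = 0 := by
    refine le_antisymm ?_ (hh_nonneg c)
    have := hkey c hcIcc
    rwa [hint_ac c ⟨hac, le_rfl⟩] at this
  have hc0 : ∀ u ∈ Set.Icc a c, h u = 0 := by
    intro u hu
    rcases lt_or_eq_of_le hu.2 with hlt | heq
    · exact h_zero_Ico u ⟨hu.1, hlt⟩
    · rw [heq]; exact hc_end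
  have hceq : c = b := by
    by_contra hne
    have hclt : c < b := lt_of_le_of_ne hcb hne
    have hGcont : ContinuousOn (fun x => ∫ u in Set.Icc c x, g u) (Set.Icc c b) :=
      continuousOn_primitive_Icc (hg_int.mono_set (Set.Icc_subset_Icc hac le_rfl))
    have hG0 : (∫ u in Set.Icc c c, g u) = 0 := by
      rw [MeasureTheory.integral_Icc_eq_integral_Ioc, Set.Ioc_self, MeasureTheory.setIntegral_empty]
    have hGc : Filter.Tendsto (fun x => ∫ u in Set.Icc c x, g u)
        (𝓝[Set.Icc c b] c) (𝓝 0) := by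
      have := hGcont c (Set.left_mem_Icc.2 hclt.le)
      rwa [ContinuousWithinAt, hG0] at this
    have hev : ∀ᶠ x in 𝓝[Set.Ioc c b] c,
        (∫ u in Set.Icc c x, g u) < 1/2 :=
      (hGc.mono_left (nhdsWithin_mono c Set.Ioc_subset_Icc_self)).eventually_lt_const
        (by norm_num)
    have hne' : (𝓝[Set.Ioc c b] c).NeBot := by
      refine mem_closure_iff_nhdsWithin_neBot.mp ?_
      rw [closure_Ioc hclt.ne]
      exact Set.left_mem_Icc.2 hclt.le
    obtain ⟨t1, hGt1, ht1mem⟩ := (hev.and eventually_mem_nhdsWithin).exists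
    have ht1ab : t1 ∈ Set.Icc a b := ⟨hac.trans ht1mem.1.le, ht1mem.2⟩
    have hG1 : (∫ u in c..t1, g u) < 1/2 := by
      rw [intervalIntegral.integral_of_le ht1mem.1.le,
        ← MeasureTheory.integral_Icc_eq_integral_Ioc]
      exact hGt1
    obtain ⟨ts, htsmem, htsmax⟩ := isCompact_Icc.exists_isMaxOn
      (Set.nonempty_Icc.2 ht1mem.1.le)
      (hh_cont.mono (Set.Icc_subset_Icc hac ht1mem.2))
    have hts_ab : ts ∈ Set.Icc a b := ⟨hac.trans htsmem.1, htsmem.2.trans ht1mem.2⟩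
    have hM0 : 0 ≤ h ts := hh_nonneg ts
    have i1 : IntervalIntegrable (fun s => g s * h s) volume a c :=
      intervalIntegrable_of_integrableOn hgh_int hcIcc
    have i2 : IntervalIntegrable (fun s => g s * h s) volume c ts :=
      intervalIntegrable_of_integrableOn' hgh_int hcIcc hts_ab
    have i3 : IntervalIntegrable g volume c ts :=
      intervalIntegrable_of_integrableOn' hg_int hcIcc hts_ab
    have i4 : IntervalIntegrable g volume ts t1 :=
      intervalIntegrable_of_integrableOn' hg_int hts_ab ht1ab
    have key := hkey ts hts_ab
    have e5 : (∫ s in a..ts, g s * h s) = ∫ s in c..ts, g s * h s := by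
      rw [← intervalIntegral.integral_add_adjacent_intervals i1 i2,
        hint_ac c ⟨hac, le_rfl⟩, zero_add]
    have e6 : (∫ s in c..ts, g s * h s) ≤ (∫ s in c..ts, g s) * h ts := by
      rw [← intervalIntegral.integral_mul_const]
      refine intervalIntegral.integral_mono_on htsmem.1 i2 (i3.mul_const (h ts)) ?_
      intro x hx
      exact mul_le_mul_of_nonneg_left
        ((isMaxOn_iff.mp htsmax) x ⟨hx.1, hx.2.trans htsmem.2⟩) (hg_nonneg x)
    have e7 : (∫ s in c..ts, g s) ≤ ∫ s in c..t1, g s := by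
      rw [← intervalIntegral.integral_add_adjacent_intervals i3 i4]
      have : 0 ≤ ∫ s in ts..t1, g s :=
        intervalIntegral.integral_nonneg htsmem.2 (fun u _ => hg_nonneg u)
      linarith
    have hMle : h ts ≤ (1/2) * h ts := by
      calc h ts ≤ ∫ s in a..ts, g s * h s := key
      _ = ∫ s in c..ts, g s * h s := e5
      _ ≤ (∫ s in c..ts, g s) * h ts := e6
      _ ≤ (∫ s in c..t1, g s) * h ts := mul_le_mul_of_nonneg_right e7 hM0
      _ ≤ (1/2) * h ts := mul_le_mul_of_nonneg_right hG1.le hM0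
    have hM_eq : h ts = 0 := by linarith
    have ht1S : t1 ∈ S := by
      refine ⟨ht1ab, fun u hu => ?_⟩
      rcases le_or_gt u c with huc | hcu
      · exact hc0 u ⟨hu.1, huc⟩
      · refine le_antisymm ?_ (hh_nonneg u)
        have := (isMaxOn_iff.mp htsmax) u ⟨hcu.le, hu.2⟩
        linarith
    exact absurd (le_csSup hbdd ht1S) (not_le.2 ht1mem.1)
  intro t ht i
  have h0 : h t = 0 := hc0 t (by rw [hceq]; exact ht)
  have hle := hh_le t i
  rw [h0] at hle
  exact norm_le_zero_iff.mp hle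
end Aux
open Aux in
/-- part of Theorem 2: the kernel of `(L,B)` has the same dimension as the
kernel of the characteristic matrix `M(L,B)`. -/
theorem kernel_dim_eq_charM_kernel_dim (a b : ℝ) (hab : a < b)
    (m r n : ℕ) (hm : 1 ≤ m) (hr : 1 ≤ r) (hn : 1 ≤ n) (p : ℝ≥0∞) (hp : 1 ≤ p)
    (A : ℝ → Matrix (Fin m) (Fin m) ℂ) (hA : MMemW p (n - 1) a b A)
    (B : (ℝ → Fin m → ℂ) → (Fin r → ℂ)) (hB : IsBddLin p n a b B)
    (Y : ℝ → Matrix (Fin m) (Fin m) ℂ) (hY : MMemW p n a b Y) (hYf : IsFund a b A Y) :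
    KerDim p n a b A B
      (Module.finrank ℂ (LinearMap.ker (Matrix.mulVecLin (charM B Y)))) := by
  classical
  have haI : a ∈ Set.Icc a b := Set.left_mem_Icc.2 hab.le
  have hn0 : n ≠ 0 := by omega
  let K := LinearMap.ker (Matrix.mulVecLin (charM B Y))
  let bK : Module.Basis (Fin (Module.finrank ℂ K)) ℂ K := Module.finBasis ℂ K
  have hA_int : ∀ i j, IntegrableOn (fun s => A s i j) (Set.Icc a b) :=
    fun i j => memW_integrableOn hp (hA i j)
  have hY_cont : ∀ i j, ContinuousOn (fun s => Y s i j) (Set.Icc a b) :=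
    fun i j => memW_continuousOn hn0 (hY i j)
  have hYv_cont : ∀ (c : Fin m → ℂ) (i : Fin m),
      ContinuousOn (fun t => (Y t *ᵥ c) i) (Set.Icc a b) := by
    intro c i
    have : (fun t => (Y t *ᵥ c) i) = fun t => ∑ j, Y t i j * c j := rfl
    rw [this]
    exact continuousOn_finset_sum _ fun j _ => (hY_cont i j).mul continuousOn_const
  have hVMem : ∀ c : Fin m → ℂ, VMemW p n a b (fun t => Y t *ᵥ c) := by
    intro c i
    show MemW p n a b fun t => (Y t *ᵥ c) i
    have e : (fun t => (Y t *ᵥ c) i) = fun t => ∑ j, c j * Y t i j := by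
      funext t
      show ∑ j, Y t i j * c j = ∑ j, c j * Y t i j
      exact Finset.sum_congr rfl fun j _ => mul_comm _ _
    rw [e]
    exact memW_sum hab hp Finset.univ c (fun j t => Y t i j) (fun j _ => hY i j)
  have hSolves : ∀ c, Solves a b A 0 (fun t => Y t *ᵥ c) :=
    solves_mulVec hab hA_int hY_cont hYf
  set col : Fin m → (ℝ → Fin m → ℂ) := fun j => fun t k => Y t k j with hcol
  have hcol_decomp : ∀ c : Fin m → ℂ, (fun t => Y t *ᵥ c) = ∑ j, c j • col j := by
    intro c
    funext t k
    simp only [Finset.sum_apply, Pi.smul_apply, smul_eq_mul, hcol]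
    show ∑ j, Y t k j * c j = ∑ j, c j * Y t k j
    exact Finset.sum_congr rfl fun j _ => mul_comm _ _
  have hBY : ∀ c : Fin m → ℂ, B (fun t => Y t *ᵥ c) = Matrix.mulVecLin (charM B Y) c := by
    intro c
    rw [hcol_decomp c, B_sum hB Finset.univ (fun j => c j • col j)]
    funext i
    rw [Finset.sum_apply, Matrix.mulVecLin_apply]
    show ∑ j, B (c j • col j) i = ∑ j, charM B Y i j * c j
    refine Finset.sum_congr rfl fun j _ => ?_
    rw [hB.2.1 (c j) (col j)]
    show c j * B (col j) i = charM B Y i j * c j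
    rw [mul_comm]
    rfl
  refine ⟨fun i => fun t => Y t *ᵥ (bK i : Fin m → ℂ), fun i => ⟨hVMem _, hSolves _, ?_⟩,
    ?_, ?_⟩
  · rw [hBY (bK i)]
    exact (bK i).2
  · -- linear independence
    have h1 : LinearIndependent ℂ (fun i => (bK i : Fin m → ℂ)) :=
      bK.linearIndependent.map' K.subtype K.ker_subtype
    apply LinearIndependent.of_comp
      (LinearMap.proj (R := ℂ) (φ := fun _ : Set.Icc a b => Fin m → ℂ) ⟨a, haI⟩)
    have e : ((LinearMap.proj (R := ℂ) (φ := fun _ : Set.Icc a b => Fin m → ℂ) ⟨a, haI⟩)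
        ∘ fun i => (fun tc : Set.Icc a b => Y ↑tc *ᵥ (bK i : Fin m → ℂ)))
        = fun i => (bK i : Fin m → ℂ) := by
      funext i
      show Y a *ᵥ (bK i : Fin m → ℂ) = (bK i : Fin m → ℂ)
      rw [hYf.1, Matrix.one_mulVec]
    rw [e]
    exact h1
  · -- spanning
    intro y hy hySolves hBy
    set v := y a with hv
    have hy_cont : ∀ i, ContinuousOn (fun t => y t i) (Set.Icc a b) :=
      fun i => memW_continuousOn hn0 (hy i)
    -- z := y - Y·v satisfies the homogeneous Volterra identity
    have hz_cont : ∀ i, ContinuousOn (fun t => (y t - Y t *ᵥ v) i) (Set.Icc a b) := by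
      intro i
      show ContinuousOn (fun t => y t i - (Y t *ᵥ v) i) (Set.Icc a b)
      exact (hy_cont i).sub (hYv_cont v i)
    have hAy_int : ∀ i, IntegrableOn (fun s => (A s *ᵥ y s) i) (Set.Icc a b) :=
      Az_integrable hA_int hy_cont
    have hAYv_int : ∀ i, IntegrableOn (fun s => (A s *ᵥ (Y s *ᵥ v)) i) (Set.Icc a b) :=
      Az_integrable hA_int (hYv_cont v)
    have hz_eq : ∀ t ∈ Set.Icc a b, ∀ i,
        (y t - Y t *ᵥ v) i = - ∫ s in a..t, (A s *ᵥ (y s - Y s *ᵥ v)) i := by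
      intro t ht i
      have e1 : y t i = v i - ∫ s in a..t, (A s *ᵥ y s) i := by
        have := hySolves t ht i
        simp only [Pi.zero_apply, zero_sub] at this
        rw [this, intervalIntegral.integral_neg, ← hv]
        ring
      have e2 : (Y t *ᵥ v) i = v i - ∫ s in a..t, (A s *ᵥ (Y s *ᵥ v)) i := by
        have := hSolves v t ht i
        simp only [Pi.zero_apply, zero_sub] at this
        rw [this, intervalIntegral.integral_neg, hYf.1, Matrix.one_mulVec]
        ring
      show y t i - (Y t *ᵥ v) i = _
      rw [e1, e2]
      have e3 : ∫ s in a..t, (A s *ᵥ (y s - Y s *ᵥ v)) i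
          = (∫ s in a..t, (A s *ᵥ y s) i) - ∫ s in a..t, (A s *ᵥ (Y s *ᵥ v)) i := by
        rw [← intervalIntegral.integral_sub
          (intervalIntegrable_of_integrableOn (hAy_int i) ht)
          (intervalIntegrable_of_integrableOn (hAYv_int i) ht)]
        refine intervalIntegral.integral_congr fun s _ => ?_
        rw [Matrix.mulVec_sub]
        rfl
      rw [e3]
      ring
    have hz0 := gronwall_zero hab hA_int hz_cont hz_eq
    have hyYv : ∀ t ∈ Set.Icc a b, y t = Y t *ᵥ v := by
      intro t ht
      funext i
      have h0 : y t i - (Y t *ᵥ v) i = 0 := hz0 t ht i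
      exact sub_eq_zero.mp h0
    -- the difference y - Y·v is in (W_p^n)^m and vanishes on [a,b], so B kills it
    have hzVMem : VMemW p n a b (fun t => y t - Y t *ᵥ v) := by
      intro i
      show MemW p n a b fun t => y t i - (Y t *ᵥ v) i
      have e : (fun t => y t i - (Y t *ᵥ v) i)
          = fun t => y t i + (-1 : ℂ) * (fun u => (Y u *ᵥ v) i) t := by
        funext t; ring
      rw [e]
      exact memW_add hab hp (hy i) (memW_smul hab (-1) (hVMem v i))
    have hBz : B (fun t => y t - Y t *ᵥ v) = 0 :=
      B_vanish hB hab hzVMem fun t ht => by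
        funext i
        show y t i - (Y t *ᵥ v) i = 0
        rw [hyYv t ht]
        ring
    have hBsplit : B y = B (fun t => Y t *ᵥ v) := by
      have e : y = (fun t => Y t *ᵥ v) + (fun t => y t - Y t *ᵥ v) := by
        funext t i
        show y t i = (Y t *ᵥ v) i + (y t i - (Y t *ᵥ v) i)
        ring
      calc B y = B ((fun t => Y t *ᵥ v) + (fun t => y t - Y t *ᵥ v)) := by rw [← e]
      _ = B (fun t => Y t *ᵥ v) + B (fun t => y t - Y t *ᵥ v) := hB.1 _ _
      _ = B (fun t => Y t *ᵥ v) := by rw [hBz, add_zero]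
    have hvK : v ∈ K := by
      show Matrix.mulVecLin (charM B Y) v = 0
      rw [← hBY v, ← hBsplit, hBy]
    refine ⟨fun i => bK.repr ⟨v, hvK⟩ i, ?_⟩
    intro t ht
    have hv_eq : v = ∑ i, bK.repr ⟨v, hvK⟩ i • (bK i : Fin m → ℂ) := by
      have h2 := bK.sum_repr ⟨v, hvK⟩
      have h3 := congrArg (Submodule.subtype K) h2
      simp only [map_sum, _root_.map_smul, Submodule.coe_subtype] at h3
      exact h3.symm
    rw [hyYv t ht]
    show Y t *ᵥ v = _
    conv_lhs => rw [hv_eq]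
    rw [← Matrix.mulVecLin_apply, map_sum]
    refine Finset.sum_congr rfl fun i _ => ?_
    rw [_root_.map_smul, Matrix.mulVecLin_apply]
end
end

section
/- Every solution of the homogeneous equation y' + A y = 0 in (W_p^n)^m is of the form y(t) = Y(t)c for a unique c ∈ ℂ^m; consequently the solution space of the homogeneous equation has dimension m. -/
open MeasureTheory Set Filter Topology intervalIntegral
open scoped ENNReal NNReal Matrix

noncomputable section

section Aux

open MeasureTheory Set Filter Topology intervalIntegral

lemma aux_ii' {g : ℝ → ℝ} {a b x y : ℝ} (hg : IntegrableOn g (Set.Icc a b))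
    (hx : x ∈ Set.Icc a b) (hy : y ∈ Set.Icc a b) (hxy : x ≤ y) :
    IntervalIntegrable g volume x y := by
  apply IntegrableOn.intervalIntegrable
  rw [uIcc_of_le hxy]
  exact hg.mono_set (Icc_subset_Icc hx.1 hy.2)

lemma gronwall_zero (a b : ℝ) (hab : a ≤ b) (g N : ℝ → ℝ)
    (hg : IntegrableOn g (Set.Icc a b))
    (hg0 : ∀ s, 0 ≤ g s)
    (hN : ContinuousOn N (Set.Icc a b))
    (hN0 : ∀ t, 0 ≤ N t)
    (hbound : ∀ t ∈ Set.Icc a b, N t ≤ ∫ s in a..t, g s * N s) :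
    ∀ t ∈ Set.Icc a b, N t = 0 := by
  have hgN : ∀ x ∈ Set.Icc a b, ∀ y ∈ Set.Icc a b, x ≤ y →
      IntervalIntegrable (fun s => g s * N s) volume x y := by
    intro x hx y hy hxy
    refine (aux_ii' hg hx hy hxy).mul_continuousOn ?_
    rw [uIcc_of_le hxy]
    exact hN.mono (Icc_subset_Icc hx.1 hy.2)
  set S : Set ℝ := {t ∈ Set.Icc a b | ∀ s ∈ Set.Icc a t, N s = 0} with hS
  have haS : a ∈ S := by
    refine ⟨⟨le_refl a, hab⟩, fun s hs => ?_⟩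
    have hsa : s = a := le_antisymm hs.2 hs.1
    subst hsa
    have := hbound s ⟨le_refl s, hab⟩
    simp only [intervalIntegral.integral_same] at this
    exact le_antisymm this (hN0 s)
  have hSbdd : BddAbove S := ⟨b, fun t ht => ht.1.2⟩
  set T := sSup S with hT
  have haT : a ≤ T := le_csSup hSbdd haS
  have hTb : T ≤ b := csSup_le ⟨a, haS⟩ (fun t ht => ht.1.2)
  have hTmem : T ∈ Set.Icc a b := ⟨haT, hTb⟩
  have hlt : ∀ s, a ≤ s → s < T → N s = 0 := by
    intro s hs hsT
    obtain ⟨t, htS, hst⟩ := exists_lt_of_lt_csSup ⟨a, haS⟩ hsT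
    exact htS.2 s ⟨hs, le_of_lt hst⟩
  have hNT : N T = 0 := by
    have hint : (∫ s in a..T, g s * N s) = 0 := by
      rw [intervalIntegral.integral_congr_ae (g := fun _ => (0:ℝ)) ?_,
        intervalIntegral.integral_zero]
      have hne : ∀ᵐ x : ℝ ∂volume, x ≠ T := by
        rw [ae_iff]; push_neg; simpa using measure_singleton T
      filter_upwards [hne] with x hx hmem
      rw [uIoc_of_le haT] at hmem
      rw [hlt x (le_of_lt hmem.1) (lt_of_le_of_ne hmem.2 hx), mul_zero]
    exact le_antisymm (by rw [← hint]; exact hbound T hTmem) (hN0 T)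
  have hTS : T ∈ S := by
    refine ⟨hTmem, fun s hs => ?_⟩
    rcases lt_or_eq_of_le hs.2 with h | h
    · exact hlt s hs.1 h
    · rw [h]; exact hNT
  have hTeqb : T = b := by
    by_contra hne
    have hTltb : T < b := lt_of_le_of_ne hTb hne
    have hcont : ContinuousOn (fun u => ∫ s in T..u, g s) (Set.Icc T b) := by
      have hig : IntegrableOn g (uIcc T b) := by
        rw [uIcc_of_le (le_of_lt hTltb)]
        exact hg.mono_set (Icc_subset_Icc haT le_rfl)
      simpa [uIcc_of_le (le_of_lt hTltb)] using continuousOn_primitive_interval hig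
    have hcT' : Tendsto (fun u => ∫ s in T..u, g s) (𝓝[Set.Icc T b] T) (𝓝 0) := by
      have h00 : (0:ℝ) = ∫ s in T..T, g s := intervalIntegral.integral_same.symm
      rw [h00]
      exact hcont T ⟨le_refl T, le_of_lt hTltb⟩
    have hev : ∀ᶠ u in 𝓝[Set.Icc T b] T, (∫ s in T..u, g s) < 1/2 :=
      hcT'.eventually_lt_const (by norm_num)
    obtain ⟨ε, hε, hball⟩ := Metric.mem_nhdsWithin_iff.mp hev
    set u0 := min (T + ε/2) b with hu0
    have hTu0 : T < u0 := lt_min (by linarith) hTltb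
    have hu0b : u0 ≤ b := min_le_right _ _
    have hu0mem : u0 ∈ Set.Icc a b := ⟨le_trans haT (le_of_lt hTu0), hu0b⟩
    have hu0int : (∫ s in T..u0, g s) < 1/2 := by
      apply hball
      constructor
      · rw [Metric.mem_ball, Real.dist_eq, abs_of_pos (by linarith)]
        have : u0 ≤ T + ε/2 := min_le_left _ _
        linarith
      · exact ⟨le_of_lt hTu0, hu0b⟩
    obtain ⟨tstar, htstar, hmax⟩ := isCompact_Icc.exists_isMaxOn
      (Set.nonempty_Icc.mpr (le_of_lt hTu0))
      (hN.mono (Set.Icc_subset_Icc haT hu0b))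
    set M := N tstar with hM
    have hM0 : 0 ≤ M := hN0 tstar
    have hbd : ∀ t ∈ Set.Icc T u0, N t ≤ (1/2) * M := by
      intro t ht
      have htab : t ∈ Set.Icc a b := ⟨le_trans haT ht.1, le_trans ht.2 hu0b⟩
      have h1 : N t ≤ ∫ s in a..t, g s * N s := hbound t htab
      have hsplit : (∫ s in a..t, g s * N s)
          = (∫ s in a..T, g s * N s) + ∫ s in T..t, g s * N s :=
        (integral_add_adjacent_intervals (hgN a ⟨le_rfl, hab⟩ T hTmem haT)
          (hgN T hTmem t htab ht.1)).symm
      have hzero : (∫ s in a..T, g s * N s) = 0 := by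
        rw [intervalIntegral.integral_congr (g := fun _ => (0:ℝ)) ?_]
        · simp
        · intro s hs
          rw [uIcc_of_le haT] at hs
          show g s * N s = 0
          rw [hTS.2 s hs, mul_zero]
      have h2 : (∫ s in T..t, g s * N s) ≤ ∫ s in T..t, g s * M := by
        apply intervalIntegral.integral_mono_on ht.1 (hgN T hTmem t htab ht.1)
          ((aux_ii' hg hTmem htab ht.1).mul_const M)
        intro s hs
        exact mul_le_mul_of_nonneg_left (hmax ⟨hs.1, le_trans hs.2 ht.2⟩) (hg0 s)
      have h3 : (∫ s in T..t, g s * M) = (∫ s in T..t, g s) * M :=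
        intervalIntegral.integral_mul_const M g
      have h4 : (∫ s in T..t, g s) ≤ ∫ s in T..u0, g s := by
        rw [← integral_add_adjacent_intervals (aux_ii' hg hTmem htab ht.1)
          (aux_ii' hg htab hu0mem ht.2)]
        have : 0 ≤ ∫ s in t..u0, g s :=
          intervalIntegral.integral_nonneg ht.2 (fun u _ => hg0 u)
        linarith
      calc N t ≤ (∫ s in a..T, g s * N s) + ∫ s in T..t, g s * N s := by
            rw [← hsplit]; exact h1
        _ = ∫ s in T..t, g s * N s := by rw [hzero, zero_add]
        _ ≤ (∫ s in T..t, g s) * M := by rw [← h3]; exact h2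
        _ ≤ (1/2) * M := by
            apply mul_le_mul_of_nonneg_right _ hM0
            linarith
    have hM2 : M ≤ (1/2) * M := hbd tstar htstar
    have hMeq : M = 0 := le_antisymm (by linarith) hM0
    have hu0S : u0 ∈ S := by
      refine ⟨hu0mem, fun s hs => ?_⟩
      rcases le_or_gt s T with h | h
      · exact hTS.2 s ⟨hs.1, h⟩
      · refine le_antisymm ?_ (hN0 s)
        have := hbd s ⟨le_of_lt h, hs.2⟩
        rw [hMeq] at this
        linarith
    have : u0 ≤ T := le_csSup hSbdd hu0S
    linarith
  intro t ht
  exact hTS.2 t ⟨ht.1, hTeqb ▸ ht.2⟩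

end Aux

section MainAux

open MeasureTheory Set Filter Topology intervalIntegral

lemma MemW.continuousOn' {p : ℝ≥0∞} {n : ℕ} {a b : ℝ} {f : ℝ → ℂ}
    (hn : 1 ≤ n) (h : MemW p n a b f) : ContinuousOn f (Set.Icc a b) := by
  cases n with
  | zero => omega
  | succ k => exact h.1.continuousOn

lemma MemW.integrableOn' {p : ℝ≥0∞} {n : ℕ} {a b : ℝ} {f : ℝ → ℂ}
    (hp : 1 ≤ p) (h : MemW p n a b f) : IntegrableOn f (Set.Icc a b) volume := by
  cases n with
  | zero => exact h.integrable hp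
  | succ k => exact h.1.continuousOn.integrableOn_Icc

lemma key_sol {a b : ℝ} (hab : a ≤ b) {m n : ℕ} (hn : 1 ≤ n) {p : ℝ≥0∞} (hp : 1 ≤ p)
    {A : ℝ → Matrix (Fin m) (Fin m) ℂ} (hA : MMemW p (n-1) a b A)
    {Y : ℝ → Matrix (Fin m) (Fin m) ℂ} (hY : MMemW p n a b Y) (hYf : IsFund a b A Y)
    {y : ℝ → Fin m → ℂ} (hyW : VMemW p n a b y) (hy : Solves a b A 0 y) :
    ∀ t ∈ Set.Icc a b, y t = (Y t).mulVec (y a) := by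
  set c := y a with hc
  have hYcont : ∀ i j, ContinuousOn (fun t => Y t i j) (Set.Icc a b) :=
    fun i j => (hY i j).continuousOn' hn
  have hycont : ∀ i, ContinuousOn (fun t => y t i) (Set.Icc a b) :=
    fun i => (hyW i).continuousOn' hn
  have hAint : ∀ i j, IntegrableOn (fun t => A t i j) (Set.Icc a b) volume :=
    fun i j => (hA i j).integrableOn' hp
  have hii : ∀ {E : Type} [NormedAddCommGroup E] {f : ℝ → E},
      IntegrableOn f (Set.Icc a b) volume → ∀ t ∈ Set.Icc a b,
      IntervalIntegrable f volume a t := by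
    intro E _ f hf t ht
    apply IntegrableOn.intervalIntegrable
    rw [uIcc_of_le ht.1]
    exact hf.mono_set (Icc_subset_Icc le_rfl ht.2)
  have hYc : ∀ j, ContinuousOn (fun t => (Y t *ᵥ c) j) (Set.Icc a b) := by
    intro j
    have heq : (fun t => (Y t *ᵥ c) j) = fun t => ∑ k, Y t j k * c k := by
      funext t
      simp [Matrix.mulVec, dotProduct]
    rw [heq]
    exact continuousOn_finset_sum _ (fun k _ => (hYcont j k).mul continuousOn_const)
  have hAw : ∀ (w : ℝ → Fin m → ℂ), (∀ j, ContinuousOn (fun t => w t j) (Set.Icc a b)) →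
      ∀ i, ∀ t ∈ Set.Icc a b, IntervalIntegrable (fun s => (A s *ᵥ w s) i) volume a t := by
    intro w hw i t ht
    have heq : (fun s => (A s *ᵥ w s) i)
        = ∑ j ∈ Finset.univ, (fun s => A s i j * w s j) := by
      funext s
      simp [Matrix.mulVec, dotProduct]
    rw [heq]
    apply IntervalIntegrable.sum
    intro j _
    apply (hii (hAint i j) t ht).mul_continuousOn
    rw [uIcc_of_le ht.1]
    exact (hw j).mono (Icc_subset_Icc le_rfl ht.2)
  have hAy_ii := hAw y hycont
  have hAYc_ii := hAw (fun t => Y t *ᵥ c) hYc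
  have hAYij : ∀ i j, ∀ t ∈ Set.Icc a b,
      IntervalIntegrable (fun s => (A s * Y s) i j) volume a t := by
    intro i j t ht
    have heq : (fun s => (A s * Y s) i j)
        = ∑ k ∈ Finset.univ, (fun s => A s i k * Y s k j) := by
      funext s
      simp [Matrix.mul_apply]
    rw [heq]
    apply IntervalIntegrable.sum
    intro k _
    apply (hii (hAint i k) t ht).mul_continuousOn
    rw [uIcc_of_le ht.1]
    exact (hYcont k j).mono (Icc_subset_Icc le_rfl ht.2)
  have hYc_eq : ∀ t ∈ Set.Icc a b, ∀ i,
      (Y t *ᵥ c) i = c i - ∫ s in a..t, (A s *ᵥ (Y s *ᵥ c)) i := by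
    intro t ht i
    have h1 : (Y t *ᵥ c) i = ∑ j, Y t i j * c j := by simp [Matrix.mulVec, dotProduct]
    rw [h1]
    have h2 : ∀ j, Y t i j * c j
        = (1 : Matrix (Fin m) (Fin m) ℂ) i j * c j - (∫ s in a..t, (A s * Y s) i j) * c j := by
      intro j
      rw [hYf.2 t ht i j, sub_mul]
    rw [Finset.sum_congr rfl (fun j _ => h2 j), Finset.sum_sub_distrib]
    congr 1
    · have h5 : ∑ j, (1 : Matrix (Fin m) (Fin m) ℂ) i j * c j
          = (Matrix.mulVec 1 c) i := by simp [Matrix.mulVec, dotProduct]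
      rw [h5, Matrix.one_mulVec]
    · have h3 : ∀ j, (∫ s in a..t, (A s * Y s) i j) * c j
          = ∫ s in a..t, (A s * Y s) i j * c j :=
        fun j => (intervalIntegral.integral_mul_const _ _).symm
      rw [Finset.sum_congr rfl (fun j _ => h3 j),
        ← intervalIntegral.integral_finset_sum (fun j _ => (hAYij i j t ht).mul_const _)]
      apply intervalIntegral.integral_congr
      intro s _
      show ∑ j, (A s * Y s) i j * c j = (A s *ᵥ (Y s *ᵥ c)) i
      rw [Matrix.mulVec_mulVec]
      simp [Matrix.mulVec, dotProduct]
  have hz : ∀ t ∈ Set.Icc a b, ∀ i, y t i - (Y t *ᵥ c) i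
      = - ∫ s in a..t, ((A s *ᵥ y s) i - (A s *ᵥ (Y s *ᵥ c)) i) := by
    intro t ht i
    have h1 := hy t ht i
    simp only [Pi.zero_apply, zero_sub] at h1
    rw [intervalIntegral.integral_neg] at h1
    rw [h1, hYc_eq t ht i,
      intervalIntegral.integral_sub (hAy_ii i t ht) (hAYc_ii i t ht)]
    ring
  set g : ℝ → ℝ := fun s => ∑ i, ∑ j, ‖A s i j‖ with hgdef
  have hg0 : ∀ s, 0 ≤ g s :=
    fun s => Finset.sum_nonneg (fun i _ => Finset.sum_nonneg (fun j _ => norm_nonneg _))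
  have hgint : IntegrableOn g (Set.Icc a b) volume := by
    apply integrable_finset_sum
    intro i _
    apply integrable_finset_sum
    intro j _
    exact (hAint i j).norm
  set N : ℝ → ℝ := fun t => ‖y t - Y t *ᵥ c‖ with hNdef
  have hNc : ContinuousOn N (Set.Icc a b) := by
    apply ContinuousOn.norm
    exact continuousOn_pi.mpr (fun i => (hycont i).sub (hYc i))
  have hbound : ∀ t ∈ Set.Icc a b, N t ≤ ∫ s in a..t, g s * N s := by
    intro t ht
    have hnn : 0 ≤ ∫ s in a..t, g s * N s :=
      intervalIntegral.integral_nonneg ht.1 (fun u _ => mul_nonneg (hg0 u) (norm_nonneg _))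
    rw [hNdef]
    refine (pi_norm_le_iff_of_nonneg hnn).mpr (fun i => ?_)
    rw [Pi.sub_apply, hz t ht i, norm_neg]
    refine le_trans (intervalIntegral.norm_integral_le_integral_norm ht.1) ?_
    apply intervalIntegral.integral_mono_on ht.1
      ((hAy_ii i t ht).sub (hAYc_ii i t ht)).norm
    · exact (hii hgint t ht).mul_continuousOn
        (by rw [uIcc_of_le ht.1]; exact hNc.mono (Icc_subset_Icc le_rfl ht.2))
    · intro s hs
      have heq : (A s *ᵥ y s) i - (A s *ᵥ (Y s *ᵥ c)) i
          = (A s *ᵥ (y s - Y s *ᵥ c)) i := by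
        rw [Matrix.mulVec_sub]; rfl
      rw [heq]
      calc ‖(A s *ᵥ (y s - Y s *ᵥ c)) i‖
          = ‖∑ j, A s i j * (y s - Y s *ᵥ c) j‖ := by simp [Matrix.mulVec, dotProduct]
        _ ≤ ∑ j, ‖A s i j * (y s - Y s *ᵥ c) j‖ := norm_sum_le _ _
        _ = ∑ j, ‖A s i j‖ * ‖(y s - Y s *ᵥ c) j‖ := by simp [norm_mul]
        _ ≤ ∑ j, ‖A s i j‖ * N s := Finset.sum_le_sum
            (fun j _ => mul_le_mul_of_nonneg_left (norm_le_pi_norm _ j) (norm_nonneg _))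
        _ = (∑ j, ‖A s i j‖) * N s := by rw [Finset.sum_mul]
        _ ≤ g s * N s := by
            apply mul_le_mul_of_nonneg_right _ (norm_nonneg _)
            exact Finset.single_le_sum (f := fun i => ∑ j, ‖A s i j‖)
              (fun i _ => Finset.sum_nonneg fun j _ => norm_nonneg _) (Finset.mem_univ i)
  have hzero := gronwall_zero a b hab g N hgint hg0 hNc (fun t => norm_nonneg _) hbound
  intro t ht
  have hz0 : y t - Y t *ᵥ c = 0 := norm_eq_zero.mp (hzero t ht)
  exact sub_eq_zero.mp hz0

end MainAux

/-- every solution of `y' + A y = 0` in `(W_p^n)^m` is `y(t) = Y(t)c` for a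
unique `c ∈ ℂ^m`; consequently the solution space of the homogeneous equation has
dimension `m` (the columns of `Y` are linearly independent on `[a,b]`). -/
theorem homogeneous_solutions (a b : ℝ) (hab : a < b)
    (m n : ℕ) (hm : 1 ≤ m) (hn : 1 ≤ n) (p : ℝ≥0∞) (hp : 1 ≤ p)
    (A : ℝ → Matrix (Fin m) (Fin m) ℂ) (hA : MMemW p (n - 1) a b A)
    (Y : ℝ → Matrix (Fin m) (Fin m) ℂ) (hY : MMemW p n a b Y) (hYf : IsFund a b A Y) :
    (∀ y : ℝ → Fin m → ℂ, VMemW p n a b y → Solves a b A 0 y →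
        ∃! c : Fin m → ℂ, ∀ t ∈ Set.Icc a b, y t = (Y t).mulVec c) ∧
    LinearIndependent ℂ (fun j : Fin m => fun tc : Set.Icc a b => fun i => Y tc i j) := by
  have hab' := le_of_lt hab
  constructor
  · intro y hyW hy
    refine ⟨y a, fun t ht => key_sol hab' hn hp hA hY hYf hyW hy t ht, ?_⟩
    intro c' hc'
    have h := hc' a ⟨le_rfl, hab'⟩
    rw [hYf.1, Matrix.one_mulVec] at h
    exact h.symm
  · rw [Fintype.linearIndependent_iff]
    intro c hc j
    have ha : (a : ℝ) ∈ Set.Icc a b := ⟨le_rfl, hab'⟩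
    have h := congrFun (congrFun hc ⟨a, ha⟩) j
    simp only [Finset.sum_apply, Pi.smul_apply, Pi.zero_apply, smul_eq_mul] at h
    simpa [hYf.1, Matrix.one_apply] using h
end
end
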